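/- Any Boolean circuit over unbounded fan-in AND, OR, NOT gates computing SM_{n,k} with k ≥ 2 has at least n/2 - 1 gates. -/

import Mathlib

def occursIn {n k : ℕ} (x : Fin n → Bool) (y : Fin k → Bool) : Prop :=
  ∃ i, ∃ _ : i + k ≤ n, ∀ t : Fin k, x ⟨i + t.val, by have := t.isLt; omega⟩ = y t

def gateEval (isAnd : Bool) (vals : List Bool) : Bool :=
  if isAnd then vals.all id else vals.any id

structure Circuit (V : Type) (s : ℕ) where
  gty : Fin s → Bool
  wires : Fin s → List ((V ⊕ Fin s) × Bool)
  acyc : ∀ g : Fin s, ∀ w ∈ wires g, ∀ g' : Fin s, w.1 = Sum.inr g' → g'.val < g.val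
  out : (V ⊕ Fin s) × Bool

def wireVal {V : Type} {s : ℕ} (a : V → Bool) (vals : Fin s → Bool) :
    (V ⊕ Fin s) × Bool → Bool
  | (Sum.inl v, neg) => xor neg (a v)
  | (Sum.inr g, neg) => xor neg (vals g)

def Consistent {V : Type} {s : ℕ} (C : Circuit V s) (a : V → Bool)
    (vals : Fin s → Bool) : Prop :=
  ∀ g, vals g = gateEval (C.gty g) ((C.wires g).map (wireVal a vals))

def Computes {V : Type} {s : ℕ} (C : Circuit V s) (f : (V → Bool) → Prop) : Prop :=
  ∀ a, ∃ vals, Consistent C a vals ∧ (wireVal a vals C.out = true ↔ f a)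

namespace SMLB

variable {n k s : ℕ}

/-- wire is a literal of an odd, not-yet-fixed x-variable -/
def goodWire (d : List (Fin n × Bool)) :
    ((Fin n ⊕ Fin k) ⊕ Fin s) × Bool → Bool
  | (Sum.inl (Sum.inl i), _) => (i.val % 2 == 1) && !(d.any (fun q => q.1 == i))
  | _ => false

def fixes (C : Circuit (Fin n ⊕ Fin k) s) : ℕ → List (Fin n × Bool)
  | 0 => []
  | g+1 =>
    let d := fixes C g
    if hg : g < s then
      match (C.wires ⟨g, hg⟩).find? (goodWire d) with
      | some (Sum.inl (Sum.inl i), neg) =>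
          (i, if C.gty ⟨g, hg⟩ then neg else !neg) :: d
      | _ => d
    else d

variable (C : Circuit (Fin n ⊕ Fin k) s)

lemma fixes_length : ∀ g, (fixes C g).length ≤ g := by
  intro g
  induction g with
  | zero => simp [fixes]
  | succ g ih =>
    rw [fixes]
    split
    · split
      · simp only [List.length_cons]; omega
      · omega
    · omega

lemma fixes_mono {g g' : ℕ} (h : g ≤ g') : ∀ x ∈ fixes C g, x ∈ fixes C g' := by
  induction g', h using Nat.le_induction with
  | base => exact fun x hx => hx
  | succ m hm ih =>
    intro x hx
    have hx' := ih x hx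
    rw [fixes]
    split
    · split
      · exact List.mem_cons_of_mem _ hx'
      · exact hx'
    · exact hx'

lemma fixes_odd : ∀ g, ∀ x ∈ fixes C g, x.1.val % 2 = 1 := by
  intro g
  induction g with
  | zero => simp [fixes]
  | succ g ih =>
    rw [fixes]
    split
    · split
      next i neg heq =>
        intro x hx
        rcases List.mem_cons.mp hx with h1 | h1
        · subst h1
          have := List.find?_some heq
          simp [goodWire] at this
          exact this.1
        · exact ih x h1
      next => exact ih
    · exact ih

lemma fixes_keys_nodup : ∀ g, ((fixes C g).map Prod.fst).Nodup := by
  intro g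
  induction g with
  | zero => simp [fixes]
  | succ g ih =>
    rw [fixes]
    split
    · split
      next i neg heq =>
        have hg := List.find?_some heq
        simp [goodWire] at hg
        simp only [List.map_cons, List.nodup_cons]
        refine ⟨?_, ih⟩
        intro hmem
        rcases List.mem_map.mp hmem with ⟨q, hq, hq1⟩
        rcases q with ⟨q1, q2⟩
        cases q2
        · exact (hg.2 q1).1 hq hq1
        · exact (hg.2 q1).2 hq hq1
      next => exact ih
    · exact ih

lemma lookup_eq_of_mem {l : List (Fin n × Bool)} (hnd : (l.map Prod.fst).Nodup)
    {i : Fin n} {v : Bool} (h : (i, v) ∈ l) : l.lookup i = some v := by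
  induction l with
  | nil => simp at h
  | cons q l ih =>
    simp only [List.map_cons, List.nodup_cons] at hnd
    rcases List.mem_cons.mp h with h1 | h1
    · subst h1; simp [List.lookup]
    · have hne : (i == q.1) = false := by
        refine beq_eq_false_iff_ne.mpr (fun he => ?_)
        exact hnd.1 (he ▸ List.mem_map.mpr ⟨(i, v), h1, rfl⟩)
      simp only [List.lookup, hne]
      exact ih hnd.2 h1

lemma mem_of_lookup_eq_some {l : List (Fin n × Bool)} {i : Fin n} {v : Bool}
    (h : l.lookup i = some v) : (i, v) ∈ l := by
  induction l with
  | nil => simp [List.lookup] at h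
  | cons q l ih =>
    rcases hb : (i == q.1) with _ | _
    · simp only [List.lookup, hb] at h
      exact List.mem_cons_of_mem _ (ih h)
    · simp only [List.lookup, hb] at h
      have : i = q.1 := beq_iff_eq.mp hb
      have : q = (i, v) := by
        rcases q with ⟨q1, q2⟩
        simp_all
      simp [this]


def bval (p : Fin n) : Bool :=
  if h : 2 ≤ p.val then
    !(((fixes C s).lookup ⟨p.val - 2, by have := p.isLt; omega⟩).getD false)
  else true

def xasn (p : Fin n) (c : Bool) : Fin n → Bool := fun i =>
  if i = p then c
  else if i.val + 1 = p.val then bval C p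
  else ((fixes C s).lookup i).getD (!(bval C p))

lemma xasn_fix (p : Fin n) (hpodd : p.val % 2 = 1)
    (hp : ∀ v : Bool, (p, v) ∉ fixes C s) (c : Bool) :
    ∀ x ∈ fixes C s, xasn C p c x.1 = x.2 := by
  rintro ⟨i, v⟩ hx
  have hi : i ≠ p := fun he => hp v (he ▸ hx)
  have hio : i.val % 2 = 1 := fixes_odd C s _ hx
  have h2 : ¬(i.val + 1 = p.val) := by omega
  simp [xasn, hi, h2, lookup_eq_of_mem (fixes_keys_nodup C s) hx]

lemma no_pair (p : Fin n) (hpodd : p.val % 2 = 1)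
    (hp : ∀ v : Bool, (p, v) ∉ fixes C s) (j : ℕ) (hj : j + 1 < n)
    (h1 : xasn C p (!(bval C p)) ⟨j, by omega⟩ = bval C p)
    (h2 : xasn C p (!(bval C p)) ⟨j+1, hj⟩ = bval C p) : False := by
  have char : ∀ (i : Fin n), xasn C p (!(bval C p)) i = bval C p →
      (i.val + 1 = p.val ∨ ((i, bval C p) ∈ fixes C s ∧ i.val % 2 = 1)) ∧ i.val ≠ p.val := by
    intro i hi
    unfold xasn at hi
    by_cases h : i = p
    · rw [if_pos h] at hi; simp at hi
    · rw [if_neg h] at hi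
      refine ⟨?_, fun he => h (Fin.ext he)⟩
      by_cases h2 : i.val + 1 = p.val
      · exact Or.inl h2
      · rw [if_neg h2] at hi
        right
        rcases hlk : (fixes C s).lookup i with _ | v
        · rw [hlk] at hi; simp at hi
        · rw [hlk] at hi; simp at hi; subst hi
          have hm := mem_of_lookup_eq_some hlk
          exact ⟨hm, fixes_odd C s _ hm⟩
  have c1 := char _ h1
  have c2 := char _ h2
  rcases c1.1 with hA | ⟨hm1, ho1⟩
  · exact c2.2 (by simpa using hA)
  · rcases c2.1 with hB | ⟨hm2, ho2⟩
    · have hB' : j + 1 + 1 = p.val := hB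
      have hj' : j % 2 = 1 := ho1
      have h2p : 2 ≤ p.val := by omega
      have hje : (⟨p.val - 2, by have := p.isLt; omega⟩ : Fin n) = ⟨j, by omega⟩ :=
        Fin.ext (by simp only [Fin.val_mk]; omega)
      have hlk : (fixes C s).lookup ⟨p.val - 2, by have := p.isLt; omega⟩ = some (bval C p) := by
        rw [hje]; exact lookup_eq_of_mem (fixes_keys_nodup C s) hm1
      have : bval C p = !(bval C p) := by
        conv_lhs => rw [bval]
        rw [dif_pos h2p, hlk]
        simp
      simp at this
    · have e1 : j % 2 = 1 := ho1
      have e2 : (j+1) % 2 = 1 := ho2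
      omega

lemma vals_eq (p : Fin n) (hpodd : p.val % 2 = 1)
    (hp : ∀ v : Bool, (p, v) ∉ fixes C s)
    (a a' : Fin n ⊕ Fin k → Bool)
    (hfa : ∀ x ∈ fixes C s, a (Sum.inl x.1) = x.2)
    (hfa' : ∀ x ∈ fixes C s, a' (Sum.inl x.1) = x.2)
    (hagree : ∀ v, v ≠ Sum.inl p → a v = a' v)
    (vals vals' : Fin s → Bool)
    (hv : Consistent C a vals) (hv' : Consistent C a' vals') :
    ∀ g, vals g = vals' g := by
  suffices H : ∀ m, ∀ g : Fin s, g.val < m → vals g = vals' g by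
    exact fun g => H (g.val+1) g (Nat.lt_succ_self _)
  intro m
  induction m with
  | zero => intro g hg; omega
  | succ m ihm =>
    intro g hg
    rcases Nat.lt_or_ge g.val m with h | h
    · exact ihm g h
    rcases hf : (C.wires g).find? (goodWire (fixes C g.val)) with _ | w
    · -- no good wire: gate reads only stable values
      rw [hv g, hv' g]
      congr 1
      apply List.map_congr_left
      intro w hw
      have hbad := List.find?_eq_none.mp hf w hw
      rcases w with ⟨(i | j) | g', neg⟩
      · -- x-literal
        have hip : i ≠ p := by
          intro he; subst he
          apply hbad
          simp only [goodWire, Bool.and_eq_true, Bool.not_eq_true']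
          refine ⟨by simp [hpodd], ?_⟩
          apply List.any_eq_false.mpr
          rintro ⟨q1, q2⟩ hq
          simp only [beq_iff_eq]
          intro hqe
          subst hqe
          exact hp q2 (fixes_mono C (Nat.le_of_lt g.isLt) _ hq)
        have : a (Sum.inl i) = a' (Sum.inl i) :=
          hagree _ (by simp [hip])
        simp [wireVal, this]
      · have : a (Sum.inr j) = a' (Sum.inr j) :=
          hagree _ (by simp)
        simp [wireVal, this]
      · have hlt : g'.val < g.val := C.acyc g _ hw g' rfl
        have := ihm g' (by omega)
        simp [wireVal, this]
    · -- good wire found: gate is killed by a fixed literal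
      have hgood := List.find?_some hf
      have hmemw := List.mem_of_find?_eq_some hf
      rcases w with ⟨(i | j) | g', neg⟩
      rotate_left
      · simp [goodWire] at hgood
      · simp [goodWire] at hgood
      have hfx : fixes C (g.val + 1) =
          (i, if C.gty g then neg else !neg) :: fixes C g.val := by
        rw [fixes]
        rw [dif_pos g.isLt]
        simp only [Fin.eta, hf]
      have hmem2 : (i, if C.gty g then neg else !neg) ∈ fixes C s := by
        apply fixes_mono C (g.isLt) _
        rw [hfx]; exact List.mem_cons_self
      have hai : a (Sum.inl i) = (if C.gty g then neg else !neg) := hfa _ hmem2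
      have hai' : a' (Sum.inl i) = (if C.gty g then neg else !neg) := hfa' _ hmem2
      have hwv : wireVal a vals (Sum.inl (Sum.inl i), neg) = !(C.gty g) := by
        simp only [wireVal, hai]
        cases C.gty g <;> simp
      have hwv' : wireVal a' vals' (Sum.inl (Sum.inl i), neg) = !(C.gty g) := by
        simp only [wireVal, hai']
        cases C.gty g <;> simp
      have hm1 : (!(C.gty g)) ∈ (C.wires g).map (wireVal a vals) :=
        hwv ▸ List.mem_map.mpr ⟨_, hmemw, rfl⟩
      have hm1' : (!(C.gty g)) ∈ (C.wires g).map (wireVal a' vals') :=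
        hwv' ▸ List.mem_map.mpr ⟨_, hmemw, rfl⟩
      cases hty : C.gty g
      · -- OR gate, contains a true literal
        rw [hty] at hm1 hm1'
        rw [hv g, hv' g, hty]
        simp only [gateEval, Bool.false_eq_true, if_false]
        rw [List.any_eq_true.mpr ⟨true, by simpa using hm1, rfl⟩,
            List.any_eq_true.mpr ⟨true, by simpa using hm1', rfl⟩]
      · -- AND gate, contains a false literal
        rw [hty] at hm1 hm1'
        rw [hv g, hv' g, hty]
        simp only [gateEval, if_true]
        rw [List.all_eq_false.mpr ⟨false, by simpa using hm1, by simp⟩,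
            List.all_eq_false.mpr ⟨false, by simpa using hm1', by simp⟩]




def win (k : ℕ) (p : Fin n) : ℕ := min (p.val - 1) (n - k)

def ywin (p : Fin n) (hkn : k ≤ n) : Fin k → Bool :=
  fun t => xasn C p (bval C p) ⟨win k p + t.val, by
    have h1 : win k p ≤ n - k := Nat.min_le_right _ _
    have := t.isLt; omega⟩

lemma xasn_at_p (p : Fin n) (c : Bool) : xasn C p c p = c := by simp [xasn]

lemma xasn_at_pm1 (p : Fin n) (c : Bool) (hp1 : 1 ≤ p.val) (h : p.val - 1 < n) :
    xasn C p c ⟨p.val - 1, h⟩ = bval C p := by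
  unfold xasn
  rw [if_neg (by intro he; have := congrArg Fin.val he; simp at this; omega),
      if_pos (by simp only [Fin.val_mk]; omega)]

lemma xasn_agree (p : Fin n) (c c' : Bool) (i : Fin n) (hip : i ≠ p) :
    xasn C p c i = xasn C p c' i := by
  unfold xasn
  rw [if_neg hip, if_neg hip]

lemma occ (p : Fin n) (hkn : k ≤ n) :
    occursIn (xasn C p (bval C p)) (ywin C p hkn) := by
  refine ⟨win k p, ?_, fun t => rfl⟩
  have h1 : win k p ≤ n - k := Nat.min_le_right _ _
  omega

lemma nocc (p : Fin n) (hkn : k ≤ n) (hk : 2 ≤ k) (hpodd : p.val % 2 = 1)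
    (hp : ∀ v : Bool, (p, v) ∉ fixes C s) :
    ¬ occursIn (xasn C p (!(bval C p))) (ywin C p hkn) := by
  have hp1 : 1 ≤ p.val := by omega
  have hpn : p.val < n := p.isLt
  have hwle : win k p ≤ p.val - 1 := Nat.min_le_left _ _
  have hwnk : win k p ≤ n - k := Nat.min_le_right _ _
  have hwval : win k p = min (p.val - 1) (n - k) := rfl
  have hwp : p.val ≤ win k p + (k - 1) := by omega
  rintro ⟨i, hik, hoc⟩
  have ho1lt : p.val - 1 - win k p < k := by omega
  have ho2lt : p.val - win k p < k := by omega
  have hY1 : ywin C p hkn ⟨p.val - 1 - win k p, ho1lt⟩ = bval C p := by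
    calc ywin C p hkn ⟨p.val - 1 - win k p, ho1lt⟩
        = xasn C p (bval C p) ⟨win k p + (p.val - 1 - win k p), by omega⟩ := rfl
      _ = xasn C p (bval C p) ⟨p.val - 1, by omega⟩ := by
          have he : (⟨win k p + (p.val - 1 - win k p), by omega⟩ : Fin n)
              = ⟨p.val - 1, by omega⟩ := Fin.ext (by simp only [Fin.val_mk]; omega)
          rw [he]
      _ = bval C p := by
          unfold xasn
          rw [if_neg (by intro he; have := congrArg Fin.val he; simp at this; omega),
              if_pos (by simp only [Fin.val_mk]; omega)]
  have hY2 : ywin C p hkn ⟨p.val - win k p, ho2lt⟩ = bval C p := by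
    calc ywin C p hkn ⟨p.val - win k p, ho2lt⟩
        = xasn C p (bval C p) ⟨win k p + (p.val - win k p), by omega⟩ := rfl
      _ = xasn C p (bval C p) p := by
          have he : (⟨win k p + (p.val - win k p), by omega⟩ : Fin n) = p :=
            Fin.ext (by simp only [Fin.val_mk]; omega)
          rw [he]
      _ = bval C p := by simp [xasn]
  have e1 := hoc ⟨p.val - 1 - win k p, ho1lt⟩
  have e2 := hoc ⟨p.val - win k p, ho2lt⟩
  rw [hY1] at e1
  rw [hY2] at e2
  apply no_pair C p hpodd hp (i + (p.val - 1 - win k p)) (by omega)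
  · exact e1
  · have he : (⟨i + (p.val - 1 - win k p) + 1, by omega⟩ : Fin n)
        = ⟨i + (p.val - win k p), by omega⟩ := Fin.ext (by simp only [Fin.val_mk]; omega)
    rw [he]
    exact e2

end SMLB

theorem circuit_lower_bound (n k s : ℕ) (hk : 2 ≤ k) (hkn : k ≤ n)
    (C : Circuit (Fin n ⊕ Fin k) s)
    (hC : Computes C (fun a =>
      occursIn (fun i => a (Sum.inl i)) (fun j => a (Sum.inr j)))) :
    n / 2 - 1 ≤ s := by
  classical
  by_contra hcon
  push_neg at hcon
  have hs2 : s + 2 ≤ n / 2 := by omega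
  set L : List (Fin n) := (SMLB.fixes C s).map Prod.fst with hL
  have hLlen : L.length ≤ s := by
    rw [hL, List.length_map]; exact SMLB.fixes_length C s
  have hOcard : n / 2 ≤ (Finset.univ.filter (fun i : Fin n => i.val % 2 = 1)).card := by
    have hinj : Set.InjOn (fun a : Fin (n/2) => (⟨2 * a.val + 1, by have := a.isLt; omega⟩ : Fin n))
        (Finset.univ : Finset (Fin (n/2))) := by
      intro x _ y _ hxy
      have : 2 * x.val + 1 = 2 * y.val + 1 := congrArg Fin.val hxy
      exact Fin.ext (by omega)
    have hmaps : ∀ a ∈ (Finset.univ : Finset (Fin (n/2))),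
        (⟨2 * a.val + 1, by have := a.isLt; omega⟩ : Fin n) ∈
          Finset.univ.filter (fun i : Fin n => i.val % 2 = 1) := by
      intro a _
      simp only [Finset.mem_filter, Finset.mem_univ, true_and]
      omega
    have := Finset.card_le_card_of_injOn _ hmaps hinj
    simpa using this
  have hsub : (Finset.univ.filter (fun i : Fin n => i.val % 2 = 1)) \ L.toFinset ⊆
      Finset.univ.filter (fun i : Fin n => i.val % 2 = 1 ∧ i ∉ L) := by
    intro x hx
    simp only [Finset.mem_sdiff, Finset.mem_filter, List.mem_toFinset] at hx ⊢
    exact ⟨Finset.mem_univ x, hx.1.2, hx.2⟩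
  have hT2 : 2 ≤ (Finset.univ.filter (fun i : Fin n => i.val % 2 = 1 ∧ i ∉ L)).card := by
    have h1 := Finset.card_le_card hsub
    have h2 := Finset.le_card_sdiff L.toFinset
      (Finset.univ.filter (fun i : Fin n => i.val % 2 = 1))
    have h3 := L.toFinset_card_le
    omega
  obtain ⟨p1, hp1, p2, hp2, hne⟩ :=
    (Finset.one_lt_card (s := Finset.univ.filter (fun i : Fin n => i.val % 2 = 1 ∧ i ∉ L))).mp
      (by omega)
  rw [Finset.mem_filter] at hp1 hp2
  obtain ⟨p, hpodd, hpL, hpout⟩ :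
      ∃ p : Fin n, p.val % 2 = 1 ∧ p ∉ L ∧
        ∀ q : Fin n, C.out.1 = Sum.inl (Sum.inl q) → q ≠ p := by
    by_cases h : C.out.1 = Sum.inl (Sum.inl p1)
    · refine ⟨p2, hp2.2.1, hp2.2.2, ?_⟩
      intro q hq he
      rw [h] at hq
      have h1 : p1 = q := Sum.inl.inj (Sum.inl.inj hq)
      exact hne (by rw [h1, he])
    · exact ⟨p1, hp1.2.1, hp1.2.2, fun q hq he => h (by rw [hq, he])⟩
  have hpfix : ∀ v : Bool, (p, v) ∉ SMLB.fixes C s := by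
    intro v hv
    exact hpL (by rw [hL]; exact List.mem_map.mpr ⟨(p, v), hv, rfl⟩)
  obtain ⟨vals, hv, hiff⟩ :=
    hC (Sum.elim (SMLB.xasn C p (SMLB.bval C p)) (SMLB.ywin C p hkn))
  obtain ⟨vals', hv', hiff'⟩ :=
    hC (Sum.elim (SMLB.xasn C p (!(SMLB.bval C p))) (SMLB.ywin C p hkn))
  have hfa : ∀ x ∈ SMLB.fixes C s,
      Sum.elim (SMLB.xasn C p (SMLB.bval C p)) (SMLB.ywin C p hkn) (Sum.inl x.1) = x.2 :=
    fun x hx => SMLB.xasn_fix C p hpodd hpfix _ x hx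
  have hfa' : ∀ x ∈ SMLB.fixes C s,
      Sum.elim (SMLB.xasn C p (!(SMLB.bval C p))) (SMLB.ywin C p hkn) (Sum.inl x.1) = x.2 :=
    fun x hx => SMLB.xasn_fix C p hpodd hpfix _ x hx
  have hagree : ∀ v : Fin n ⊕ Fin k, v ≠ Sum.inl p →
      Sum.elim (SMLB.xasn C p (SMLB.bval C p)) (SMLB.ywin C p hkn) v
        = Sum.elim (SMLB.xasn C p (!(SMLB.bval C p))) (SMLB.ywin C p hkn) v := by
    rintro (i | j) hv
    · have hip : i ≠ p := fun he => hv (by rw [he])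
      simp only [Sum.elim_inl]
      exact SMLB.xasn_agree C p _ _ i hip
    · rfl
  have ht : wireVal (Sum.elim (SMLB.xasn C p (SMLB.bval C p)) (SMLB.ywin C p hkn))
      vals C.out = true := hiff.mpr (SMLB.occ C p hkn)
  have hf' : wireVal (Sum.elim (SMLB.xasn C p (!(SMLB.bval C p))) (SMLB.ywin C p hkn))
      vals' C.out = false := by
    rcases hvv : wireVal (Sum.elim (SMLB.xasn C p (!(SMLB.bval C p))) (SMLB.ywin C p hkn))
        vals' C.out with _ | _
    · rfl
    · exact absurd (hiff'.mp hvv) (SMLB.nocc C p hkn hk hpodd hpfix)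
  have hvalseq := SMLB.vals_eq C p hpodd hpfix _ _ hfa hfa' hagree vals vals' hv hv'
  have heq : wireVal (Sum.elim (SMLB.xasn C p (SMLB.bval C p)) (SMLB.ywin C p hkn))
      vals C.out
      = wireVal (Sum.elim (SMLB.xasn C p (!(SMLB.bval C p))) (SMLB.ywin C p hkn))
      vals' C.out := by
    rcases hCo : C.out with ⟨(i | j) | g', neg⟩
    · have hip : i ≠ p := hpout i (by rw [hCo])
      simp only [wireVal, Sum.elim_inl]
      rw [SMLB.xasn_agree C p _ _ i hip]
    · simp only [wireVal, Sum.elim_inr]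
    · simp only [wireVal, hvalseq g']
  rw [ht, hf'] at heq
  exact absurd heq (by simp)
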